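/- For every partition λ = (λ_1 ≥ λ_2 ≥ ⋯ ≥ λ_ℓ) of nonnegative integers, the number of sequences λ' = (λ'_1 ≥ λ'_2 ≥ ⋯ ≥ λ'_ℓ) of nonnegative integers with λ'_i ≤ λ_i for all i ∈ [ℓ] equals the determinant of the ℓ×ℓ matrix whose (i,j) entry is the binomial coefficient C(λ_j + 1, j − i + 1) (with the convention C(n,k) = 0 when k < 0). -/

import Mathlib

namespace KrewerasAux

def M (ℓ : ℕ) (lam : Fin ℓ → ℕ) : Matrix (Fin ℓ) (Fin ℓ) ℤ :=
  fun i j => if (i : ℕ) ≤ (j : ℕ) + 1 then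
    (Nat.choose (lam j + 1) ((j : ℕ) + 1 - (i : ℕ)) : ℤ) else 0

abbrev T (ℓ : ℕ) (lam : Fin ℓ → ℕ) : Type :=
  {f : Fin ℓ → ℕ // Antitone f ∧ ∀ i, f i ≤ lam i}

instance (ℓ : ℕ) (lam : Fin ℓ → ℕ) : Finite (T ℓ lam) := by
  apply Finite.of_injective
    (fun f : T ℓ lam => (fun i => (⟨f.1 i, Nat.lt_succ_of_le (f.2.2 i)⟩ : Fin (lam i + 1))))
  intro f g h
  ext i
  exact congrArg Fin.val (congrFun h i)

lemma antitone_snoc {n : ℕ} {g : Fin n → ℕ} (hg : Antitone g) :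
    Antitone (Fin.snoc g 0 : Fin (n + 1) → ℕ) := by
  intro i j hij
  induction j using Fin.lastCases with
  | last => simp [Fin.snoc_last]
  | cast j =>
    induction i using Fin.lastCases with
    | last => exact absurd hij (not_le.mpr (Fin.castSucc_lt_last j))
    | cast i =>
      simp only [Fin.snoc_castSucc]
      exact hg (Fin.castSucc_le_castSucc_iff.mp hij)

lemma card_last_zero {n : ℕ} (lam : Fin (n + 1) → ℕ) (h0 : lam (Fin.last n) = 0) :
    Nat.card (T (n + 1) lam) = Nat.card (T n (lam ∘ Fin.castSucc)) := by
  apply Nat.card_congr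
  refine ⟨fun f => ⟨fun i => f.1 i.castSucc, ?_, fun i => f.2.2 _⟩,
          fun g => ⟨Fin.snoc g.1 0, antitone_snoc g.2.1, ?_⟩, ?_, ?_⟩
  · intro i j hij
    exact f.2.1 (Fin.castSucc_le_castSucc_iff.mpr hij)
  · intro i
    induction i using Fin.lastCases with
    | last => simp [Fin.snoc_last]
    | cast i => simpa [Fin.snoc_castSucc] using g.2.2 i
  · intro f
    ext i
    induction i using Fin.lastCases with
    | last =>
      simp only [Fin.snoc_last]
      exact (Nat.le_zero.mp (h0 ▸ f.2.2 (Fin.last n))).symm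
    | cast i => simp [Fin.snoc_castSucc]
  · intro g
    ext i
    simp [Fin.snoc_castSucc]

lemma card_last_pos {n : ℕ} (lam : Fin (n + 1) → ℕ) (hlam : Antitone lam)
    (h1 : 1 ≤ lam (Fin.last n)) :
    Nat.card (T (n + 1) lam) =
      Nat.card (T (n + 1) (fun i => lam i - 1)) + Nat.card (T n (lam ∘ Fin.castSucc)) := by
  have hpos : ∀ i, 1 ≤ lam i := fun i => le_trans h1 (hlam (Fin.le_last i))
  rw [← Nat.card_sum]
  apply Nat.card_congr
  refine ⟨fun f => if h : 1 ≤ f.1 (Fin.last n) then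
      Sum.inl ⟨fun i => f.1 i - 1, ?_, fun i => Nat.sub_le_sub_right (f.2.2 i) 1⟩
    else
      Sum.inr ⟨fun i => f.1 i.castSucc, ?_, fun i => f.2.2 _⟩,
    fun s => Sum.elim
      (fun g => ⟨fun i => g.1 i + 1, fun i j hij => Nat.add_le_add_right (g.2.1 hij) 1, ?_⟩)
      (fun g => ⟨Fin.snoc g.1 0, antitone_snoc g.2.1, ?_⟩) s, ?_, ?_⟩
  · intro i j hij; exact Nat.sub_le_sub_right (f.2.1 hij) 1
  · intro i j hij; exact f.2.1 (Fin.castSucc_le_castSucc_iff.mpr hij)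
  · intro i
    have h2 : g.1 i ≤ lam i - 1 := g.2.2 i
    have := hpos i
    show g.1 i + 1 ≤ lam i
    omega
  · intro i
    induction i using Fin.lastCases with
    | last => simp [Fin.snoc_last]
    | cast i => simpa [Fin.snoc_castSucc] using g.2.2 i
  · intro f
    by_cases h : 1 ≤ f.1 (Fin.last n)
    · have hfi : ∀ i, 1 ≤ f.1 i := fun i => le_trans h (f.2.1 (Fin.le_last i))
      simp only [dif_pos h, Sum.elim_inl]
      ext i
      show f.1 i - 1 + 1 = f.1 i
      have := hfi i
      omega
    · simp only [dif_neg h, Sum.elim_inr]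
      ext i
      induction i using Fin.lastCases with
      | last =>
        have h0 : f.1 (Fin.last n) = 0 := by omega
        show (Fin.snoc (fun i => f.1 (Fin.castSucc i)) 0 : Fin (n+1) → ℕ) (Fin.last n) = f.1 (Fin.last n)
        simp [Fin.snoc_last, h0]
      | cast i =>
        show (Fin.snoc (fun i => f.1 (Fin.castSucc i)) 0 : Fin (n+1) → ℕ) (Fin.castSucc i) = f.1 (Fin.castSucc i)
        simp [Fin.snoc_castSucc]
  · intro s
    rcases s with g | g
    · simp only [Sum.elim_inl]
      refine (dif_pos (show 1 ≤ g.1 (Fin.last n) + 1 by omega)).trans ?_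
      congr 1
    · simp only [Sum.elim_inr]
      refine (dif_neg (show ¬ 1 ≤ (Fin.snoc g.1 0 : Fin (n+1) → ℕ) (Fin.last n) by simp [Fin.snoc_last])).trans ?_
      congr 1
      ext i
      simp [Fin.snoc_castSucc]

lemma det_lastcol {n : ℕ} (A : Matrix (Fin (n + 1)) (Fin (n + 1)) ℤ)
    (h : ∀ i, A i (Fin.last n) = if i = Fin.last n then 1 else 0) :
    A.det = (A.submatrix Fin.castSucc Fin.castSucc).det := by
  rw [Matrix.det_succ_column A (Fin.last n)]
  rw [Finset.sum_eq_single (Fin.last n)]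
  · rw [h (Fin.last n), if_pos rfl, Fin.succAbove_last, Fin.val_last]
    have he : ((-1 : ℤ)) ^ (n + n) = 1 := Even.neg_one_pow ⟨n, rfl⟩
    rw [he]; ring
  · intro i _ hi
    rw [h i, if_neg hi]; ring
  · intro hmem; exact absurd (Finset.mem_univ _) hmem

lemma det_last_zero {n : ℕ} (lam : Fin (n + 1) → ℕ) (h0 : lam (Fin.last n) = 0) :
    (M (n + 1) lam).det = (M n (lam ∘ Fin.castSucc)).det := by
  rw [det_lastcol]
  · congr 1
  · intro i
    have hi : (i : ℕ) < n + 1 := i.isLt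
    simp only [M, Fin.val_last, h0]
    rw [if_pos (by omega)]
    by_cases hlast : (i : ℕ) = n
    · have : n + 1 - (i : ℕ) = 1 := by omega
      rw [this, if_pos (Fin.ext (by simp [hlast]))]
      simp
    · have h2 : 1 < n + 1 - (i : ℕ) := by omega
      rw [Nat.choose_eq_zero_of_lt (by simpa using h2),
        if_neg (fun hc => hlast (by rw [hc]; simp))]
      simp

def Nmat (n : ℕ) : Matrix (Fin (n + 1)) (Fin (n + 1)) ℤ :=
  fun i k => if (k : ℕ) = (i : ℕ) + 1 then 1 else 0

lemma NB_apply {n : ℕ} (B : Matrix (Fin (n + 1)) (Fin (n + 1)) ℤ) (i j : Fin (n + 1)) :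
    (Nmat n * B) i j = if h : (i : ℕ) + 1 < n + 1 then B ⟨(i : ℕ) + 1, h⟩ j else 0 := by
  rw [Matrix.mul_apply]
  split
  · next h =>
    rw [Finset.sum_eq_single (⟨(i : ℕ) + 1, h⟩ : Fin (n + 1))]
    · simp [Nmat]
    · intro k _ hk
      have hv : (k : ℕ) ≠ (i : ℕ) + 1 := fun hc => hk (Fin.ext hc)
      simp [Nmat, hv]
    · simp
  · next h =>
    apply Finset.sum_eq_zero
    intro k _
    have hk := k.isLt
    have hv : (k : ℕ) ≠ (i : ℕ) + 1 := by omega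
    simp [Nmat, hv]

lemma key_entry {n : ℕ} (lam : Fin (n + 1) → ℕ) (hpos : ∀ i, 1 ≤ lam i) (i j : Fin (n + 1)) :
    M (n + 1) lam i j =
      ((1 + Nmat n) * (M (n + 1) fun k => lam k - 1)) i j
        + (if i = Fin.last n ∧ j = Fin.last n then 1 else 0) := by
  rw [Matrix.add_mul, Matrix.one_mul, Matrix.add_apply, NB_apply]
  have hL : lam j - 1 + 1 = lam j := Nat.succ_pred_eq_of_pos (hpos j)
  have hi := i.isLt
  have hj := j.isLt
  simp only [M, hL]
  by_cases hab : (i : ℕ) ≤ (j : ℕ) + 1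
  · by_cases hab2 : (i : ℕ) ≤ (j : ℕ)
    · by_cases hlast : (i : ℕ) = n
      · have hjn : (j : ℕ) = n := by omega
        have hil : i = Fin.last n := Fin.ext (by simp [hlast])
        have hjl : j = Fin.last n := Fin.ext (by simp [hjn])
        rw [dif_neg (by omega), if_pos hab, if_pos hab, if_pos ⟨hil, hjl⟩]
        have hk : (j : ℕ) + 1 - (i : ℕ) = 1 := by omega
        rw [hk, Nat.choose_one_right, Nat.choose_one_right]
        push_cast [hpos j]
        omega
      · have hE : ¬(i = Fin.last n ∧ j = Fin.last n) :=
          fun hc => hlast (by rw [hc.1]; simp)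
        rw [if_neg hE, dif_pos (by omega : (i : ℕ) + 1 < n + 1), if_pos hab, if_pos hab,
          if_pos (show ((⟨(i : ℕ) + 1, by omega⟩ : Fin (n + 1)) : ℕ) ≤ (j : ℕ) + 1 from
            by simp only [Fin.val_mk]; omega)]
        have h1 : (j : ℕ) + 1 - (i : ℕ) = ((j : ℕ) - (i : ℕ)) + 1 := by omega
        have h2 : (j : ℕ) + 1 - (((⟨(i : ℕ) + 1, by omega⟩ : Fin (n + 1))) : ℕ)
            = (j : ℕ) - (i : ℕ) := by simp only [Fin.val_mk]; omega
        rw [h1, h2]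
        rw [Nat.choose_succ_succ (lam j) ((j : ℕ) - (i : ℕ))]
        push_cast
        ring
    · have hij : (i : ℕ) = (j : ℕ) + 1 := by omega
      have hk0 : (j : ℕ) + 1 - (i : ℕ) = 0 := by omega
      have hE : ¬(i = Fin.last n ∧ j = Fin.last n) := fun hc => by
        rw [hc.1, hc.2] at hij; simp at hij
      rw [if_neg hE, if_pos hab, if_pos hab, hk0]
      by_cases hsh : (i : ℕ) + 1 < n + 1
      · rw [dif_pos hsh,
          if_neg (show ¬((⟨(i : ℕ) + 1, hsh⟩ : Fin (n + 1)) : ℕ) ≤ (j : ℕ) + 1 from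
            by simp only [Fin.val_mk]; omega)]
        simp
      · rw [dif_neg hsh]
        simp
  · have hE : ¬(i = Fin.last n ∧ j = Fin.last n) := fun hc => by
      rw [hc.1, hc.2] at hab; simp at hab
    rw [if_neg hE, if_neg hab, if_neg hab]
    by_cases hsh : (i : ℕ) + 1 < n + 1
    · rw [dif_pos hsh,
        if_neg (show ¬((⟨(i : ℕ) + 1, hsh⟩ : Fin (n + 1)) : ℕ) ≤ (j : ℕ) + 1 from
          by simp only [Fin.val_mk]; omega)]
      simp
    · rw [dif_neg hsh]
      simp

lemma det_rec {n : ℕ} (lam : Fin (n + 1) → ℕ) (hlam : Antitone lam)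
    (h1 : 1 ≤ lam (Fin.last n)) :
    (M (n + 1) lam).det =
      (M (n + 1) fun i => lam i - 1).det + (M n (lam ∘ Fin.castSucc)).det := by
  have hpos : ∀ i, 1 ≤ lam i := fun i => le_trans h1 (hlam (Fin.le_last i))
  set B := M (n + 1) fun k => lam k - 1 with hB
  set A := (1 + Nmat n) * B with hA
  have hupd : M (n + 1) lam =
      A.updateCol (Fin.last n)
        ((fun i => A i (Fin.last n)) + (fun i => if i = Fin.last n then (1 : ℤ) else 0)) := by
    ext i j
    rw [Matrix.updateCol_apply]
    by_cases hj : j = Fin.last n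
    · subst hj
      rw [if_pos rfl, key_entry lam hpos i (Fin.last n)]
      simp
      rfl
    · rw [if_neg hj, key_entry lam hpos i j, if_neg (fun hc => hj hc.2), add_zero]
  rw [hupd, Matrix.det_updateCol_add, Matrix.updateCol_eq_self]
  congr 1
  · rw [hA, Matrix.det_mul]
    have hdet1 : (1 + Nmat n).det = 1 := by
      rw [Matrix.det_of_upperTriangular]
      · apply Finset.prod_eq_one
        intro i _
        simp [Matrix.add_apply, Nmat, Matrix.one_apply]
      · intro i j hij
        have h1' : i ≠ j := fun hc => absurd hc.symm (ne_of_lt hij)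
        have h2' : (j : ℕ) ≠ (i : ℕ) + 1 := by
          have : (j : ℕ) < (i : ℕ) := hij
          omega
        simp [Matrix.add_apply, Nmat, Matrix.one_apply, h1', h2']
    rw [hdet1, one_mul]
  · rw [det_lastcol]
    · congr 1
      ext i j
      rw [Matrix.submatrix_apply, Matrix.updateCol_apply,
        if_neg (Fin.castSucc_lt_last j).ne]
      have hk := key_entry lam hpos i.castSucc j.castSucc
      rw [if_neg (fun hc => (Fin.castSucc_lt_last j).ne hc.2), add_zero] at hk
      rw [← hB, ← hA] at hk
      rw [← hk]
      simp [M, Function.comp]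
    · intro i
      rw [Matrix.updateCol_self]

theorem aux : ∀ (ℓ : ℕ) (lam : Fin ℓ → ℕ), Antitone lam →
    ((Nat.card (T ℓ lam) : ℤ) = (M ℓ lam).det)
  | 0, lam, hlam => by
    haveI : Nonempty (T 0 lam) :=
      ⟨⟨fun _ => 0, fun i _ _ => i.elim0, fun i => i.elim0⟩⟩
    haveI : Subsingleton (T 0 lam) :=
      ⟨fun f g => Subtype.ext (funext fun i => i.elim0)⟩
    rw [Nat.card_unique, Matrix.det_isEmpty]
    norm_num
  | (n + 1), lam, hlam => by
    have hA2 : Antitone (lam ∘ Fin.castSucc) :=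
      fun i j hij => hlam (Fin.castSucc_le_castSucc_iff.mpr hij)
    by_cases h0 : lam (Fin.last n) = 0
    · rw [card_last_zero lam h0, det_last_zero lam h0]
      exact aux n (lam ∘ Fin.castSucc) hA2
    · have h1 : 1 ≤ lam (Fin.last n) := Nat.one_le_iff_ne_zero.mpr h0
      have hA1 : Antitone (fun i => lam i - 1) :=
        fun i j hij => Nat.sub_le_sub_right (hlam hij) 1
      rw [card_last_pos lam hlam h1, det_rec lam hlam h1]
      push_cast
      rw [aux (n + 1) (fun i => lam i - 1) hA1, aux n (lam ∘ Fin.castSucc) hA2]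
termination_by ℓ lam _ => ℓ + ∑ i, lam i
decreasing_by
  · simp only [Function.comp_apply, Nat.succ_eq_add_one]
    have h := Fin.sum_univ_castSucc lam
    omega
  · simp only [Nat.succ_eq_add_one]
    have hsum : ∑ i, (lam i - 1) < ∑ i, lam i :=
      Finset.sum_lt_sum (fun i _ => Nat.sub_le _ _)
        ⟨Fin.last n, Finset.mem_univ _, by omega⟩
    omega
  · simp only [Function.comp_apply, Nat.succ_eq_add_one]
    have h := Fin.sum_univ_castSucc lam
    omega

end KrewerasAux

/-- Kreweras' determinant formula: for every partition `λ = (λ_1 ≥ ⋯ ≥ λ_ℓ)`, the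
number of weakly decreasing sequences `λ'` of nonnegative integers with `λ'_i ≤ λ_i`
for all `i` equals the determinant of the `ℓ × ℓ` matrix with entries
`C(λ_j + 1, j - i + 1)` (entries with `j - i + 1 < 0` are zero). -/
theorem kreweras_det (ℓ : ℕ) (lam : Fin ℓ → ℕ) (hlam : Antitone lam) :
    (Nat.card {f : Fin ℓ → ℕ // Antitone f ∧ ∀ i, f i ≤ lam i} : ℤ) =
      Matrix.det (fun i j : Fin ℓ =>
        if (i : ℕ) ≤ (j : ℕ) + 1 then
          (Nat.choose (lam j + 1) ((j : ℕ) + 1 - (i : ℕ)) : ℤ)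
        else 0) := by
  exact KrewerasAux.aux ℓ lam hlam
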